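/- Let n, m, p be positive natural numbers and let A (n×n), B (n×m), C (p×n) be complex matrices. Let Q₀ be an n×n positive semidefinite Hermitian matrix, R₀ an m×m positive definite Hermitian matrix, V a p×p positive definite Hermitian matrix, and W an n×n positive semidefinite Hermitian matrix. Let Σ be a positive semidefinite Hermitian matrix solving A·Σ + Σ·Aᴴ − Σ·Cᴴ·V⁻¹·C·Σ + W = 0, and set L = Σ·Cᴴ·V⁻¹. For each real α > 0, let S_α be a positive semidefinite Hermitian matrix solving S·A + Aᴴ·S − α·S·B·R₀⁻¹·Bᴴ·S + α·Q₀ = 0, set K_α = α·R₀⁻¹·Bᴴ·S_α, assume A − B·K_α is Hurwitz, and let F_α be the positive semidefinite Hermitian solution of (A − B·K_α)·F + F·(A − B·K_α)ᴴ + L·V·Lᴴ = 0. Define P_track(α) = trace(Q₀·(Σ + F_α)) and P_effort(α) = α²·trace(S_α·B·R₀⁻¹·Bᴴ·S_α·F_α). Then for all 0 < α ≤ α′: P_track(α′) ≤ P_track(α) and P_effort(α) ≤ P_effort(α′). -/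

import Mathlib

open Matrix
open scoped ComplexOrder

/-- A square complex matrix is Hurwitz if every eigenvalue has
strictly negative real part. -/
def IsHurwitz {n : ℕ} (M : Matrix (Fin n) (Fin n) ℂ) : Prop :=
  ∀ z ∈ spectrum ℂ M, z.re < 0

lemma psd_trace_nonneg {n : ℕ} {M : Matrix (Fin n) (Fin n) ℂ} (hM : M.PosSemidef) :
    0 ≤ M.trace := by
  rw [Matrix.trace]
  refine Finset.sum_nonneg fun i _ => ?_
  exact hM.diag_nonneg

lemma trace_mul_psd_nonneg {n : ℕ} {P Q : Matrix (Fin n) (Fin n) ℂ}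
    (hP : P.PosSemidef) (hQ : Q.PosSemidef) : 0 ≤ (P * Q).trace := by
  open scoped MatrixOrder in
  obtain ⟨Bq, rfl⟩ := CStarAlgebra.nonneg_iff_eq_star_mul_self.mp hQ.nonneg
  rw [star_eq_conjTranspose]
  rw [← Matrix.mul_assoc, Matrix.trace_mul_comm, ← Matrix.mul_assoc]
  exact psd_trace_nonneg (hP.mul_mul_conjTranspose_same Bq)

/-- Lemma 3 of the paper: with weights `Q(α) = α Q₀`, `R(α) = R₀ / α`, the
stationary tracking error `P_track(α) = tr (Q₀ (Σ + F_α))` is decreasing in `α`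
and the stationary control effort
`P_effort(α) = α² tr (S_α B R₀⁻¹ Bᴴ S_α F_α)` is increasing in `α`. -/
theorem lqg_ct_track_decreasing_effort_increasing {n m p : ℕ}
    (hn : 0 < n) (hm : 0 < m) (hp : 0 < p)
    (A : Matrix (Fin n) (Fin n) ℂ) (B : Matrix (Fin n) (Fin m) ℂ)
    (C : Matrix (Fin p) (Fin n) ℂ)
    (Q₀ : Matrix (Fin n) (Fin n) ℂ) (hQ₀ : Q₀.PosSemidef)
    (R₀ : Matrix (Fin m) (Fin m) ℂ) (hR₀ : R₀.PosDef)
    (V : Matrix (Fin p) (Fin p) ℂ) (hV : V.PosDef)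
    (W : Matrix (Fin n) (Fin n) ℂ) (hW : W.PosSemidef)
    -- the filter Riccati solution Σ and the Kalman gain L
    (Sg : Matrix (Fin n) (Fin n) ℂ) (hSg : Sg.PosSemidef)
    (hFARE : A * Sg + Sg * Aᴴ - Sg * Cᴴ * V⁻¹ * C * Sg + W = 0)
    (L : Matrix (Fin n) (Fin p) ℂ) (hL : L = Sg * Cᴴ * V⁻¹)
    -- the control Riccati solution S_α, gain K_α and covariance F_α for each α > 0
    (S F : ℝ → Matrix (Fin n) (Fin n) ℂ)
    (K : ℝ → Matrix (Fin m) (Fin n) ℂ)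
    (hS : ∀ α : ℝ, 0 < α → (S α).PosSemidef)
    (hCARE : ∀ α : ℝ, 0 < α →
      S α * A + Aᴴ * S α - (α : ℂ) • (S α * B * R₀⁻¹ * Bᴴ * S α) + (α : ℂ) • Q₀ = 0)
    (hK : ∀ α : ℝ, 0 < α → K α = (α : ℂ) • (R₀⁻¹ * Bᴴ * S α))
    (hHur : ∀ α : ℝ, 0 < α → IsHurwitz (A - B * K α))
    (hF : ∀ α : ℝ, 0 < α → (F α).PosSemidef)
    (hLyap : ∀ α : ℝ, 0 < α →
      (A - B * K α) * F α + F α * (A - B * K α)ᴴ + L * V * Lᴴ = 0) :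
    ∀ α α' : ℝ, 0 < α → α ≤ α' →
      (Q₀ * (Sg + F α')).trace ≤ (Q₀ * (Sg + F α)).trace ∧
      ((α : ℂ) ^ 2) * (S α * B * R₀⁻¹ * Bᴴ * S α * F α).trace
        ≤ ((α' : ℂ) ^ 2) * (S α' * B * R₀⁻¹ * Bᴴ * S α' * F α').trace := by
  have hdet : IsUnit R₀.det := hR₀.isUnit.map detMonoidHom
  have hinv : R₀⁻¹ᴴ = R₀⁻¹ := hR₀.isHermitian.inv
  have hcan : ∀ (X : Matrix (Fin m) (Fin n) ℂ), R₀ * (R₀⁻¹ * X) = X :=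
    fun X => Matrix.mul_nonsing_inv_cancel_left _ _ hdet
  -- the fundamental cost identity
  have key : ∀ a b : ℝ, 0 < a → 0 < b →
      ((a:ℂ)^2) * (Q₀ * F b).trace
        + ((b:ℂ)^2) * (S b * B * R₀⁻¹ * Bᴴ * S b * F b).trace
      = ((K b - K a)ᴴ * R₀ * (K b - K a) * F b).trace
        + (a:ℂ) * (S a * (L * V * Lᴴ)).trace := by
    intro a b ha hb
    have hS1 := (hS a ha).isHermitian
    have hS2 := (hS b hb).isHermitian
    -- completion-of-squares matrix identity
    have hId : ((a:ℂ) • ((A - B * K b)ᴴ * S a + S a * (A - B * K b))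
          + ((a:ℂ)^2) • Q₀ + (K b)ᴴ * R₀ * (K b))
          - (K b - K a)ᴴ * R₀ * (K b - K a)
        = (a:ℂ) • (S a * A + Aᴴ * S a
            - (a:ℂ) • (S a * B * R₀⁻¹ * Bᴴ * S a) + (a:ℂ) • Q₀) := by
      rw [hK a ha, hK b hb]
      simp only [conjTranspose_sub, conjTranspose_smul, conjTranspose_mul,
        conjTranspose_conjTranspose, hinv, hS1.eq, hS2.eq, Complex.star_def,
        Complex.conj_ofReal, Matrix.sub_mul, Matrix.mul_sub, Matrix.add_mul,
        Matrix.mul_add, Matrix.smul_mul, Matrix.mul_smul, smul_smul, smul_sub,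
        smul_add, Matrix.mul_assoc, hcan]
      module
    rw [hCARE a ha, smul_zero, sub_eq_zero] at hId
    -- the gain-cost term
    have hKtK : (K b)ᴴ * R₀ * K b = ((b:ℂ)^2) • (S b * B * R₀⁻¹ * Bᴴ * S b) := by
      rw [hK b hb]
      simp only [conjTranspose_smul, conjTranspose_mul, conjTranspose_conjTranspose,
        hinv, hS2.eq, Complex.star_def, Complex.conj_ofReal, Matrix.smul_mul,
        Matrix.mul_smul, smul_smul, Matrix.mul_assoc, hcan]
      module
    -- Lyapunov trace pairing
    have h1 : (A - B * K b) * F b + F b * (A - B * K b)ᴴ = -(L * V * Lᴴ) :=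
      eq_neg_of_add_eq_zero_left (hLyap b hb)
    have e1 : ((A - B * K b)ᴴ * S a * F b).trace
        = (S a * (F b * (A - B * K b)ᴴ)).trace := by
      rw [Matrix.mul_assoc, Matrix.trace_mul_comm, Matrix.mul_assoc]
    have e2 : (S a * (A - B * K b) * F b).trace
        = (S a * ((A - B * K b) * F b)).trace := by rw [Matrix.mul_assoc]
    have htr2 : ((A - B * K b)ᴴ * S a * F b).trace + (S a * (A - B * K b) * F b).trace
        = -(S a * (L * V * Lᴴ)).trace := by
      rw [e1, e2, ← Matrix.trace_add, ← Matrix.mul_add,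
        add_comm (F b * (A - B * K b)ᴴ), h1, Matrix.mul_neg, Matrix.trace_neg]
    -- take traces in hId
    have hT := congrArg (fun M => (M * F b).trace) hId
    simp only [Matrix.add_mul, Matrix.smul_mul, Matrix.trace_add,
      Matrix.trace_smul, hKtK, smul_eq_mul] at hT
    linear_combination hT - (a:ℂ) * htr2
  intro α β hα hab
  have hβ : 0 < β := hα.trans_le hab
  rcases eq_or_lt_of_le hab with rfl | hlt
  · exact ⟨le_rfl, le_rfl⟩
  have k12 := key α β hα hβ
  have k11 := key α α hα hα
  have k21 := key β α hβ hα
  have k22 := key β β hβ hβ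
  simp only [sub_self, conjTranspose_zero, Matrix.zero_mul, Matrix.mul_zero,
    Matrix.trace_zero, zero_add] at k11 k22
  have hx : 0 ≤ ((K β - K α)ᴴ * R₀ * (K β - K α) * F β).trace :=
    trace_mul_psd_nonneg (hR₀.posSemidef.conjTranspose_mul_mul_same _) (hF β hβ)
  have hy : 0 ≤ ((K α - K β)ᴴ * R₀ * (K α - K β) * F α).trace :=
    trace_mul_psd_nonneg (hR₀.posSemidef.conjTranspose_mul_mul_same _) (hF α hα)
  have hc : ((β^2 - α^2 : ℝ) : ℂ) ≠ 0 := by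
    have : (0:ℝ) < β^2 - α^2 := by nlinarith
    exact_mod_cast this.ne'
  set T1 := (Q₀ * F α).trace with hT1
  set T2 := (Q₀ * F β).trace with hT2
  set x := ((K β - K α)ᴴ * R₀ * (K β - K α) * F β).trace with hxd
  set y := ((K α - K β)ᴴ * R₀ * (K α - K β) * F α).trace with hyd
  have ha12 : 0 ≤ T1 - T2 := by
    have hsum : ((β^2 - α^2 : ℝ) : ℂ) * (T1 - T2) = x + y := by
      push_cast
      linear_combination k12 - k11 + k21 - k22
    have h2 : T1 - T2 = ((β^2 - α^2 : ℝ) : ℂ)⁻¹ * (x + y) := by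
      rw [← hsum, inv_mul_cancel_left₀ hc]
    rw [h2, ← Complex.ofReal_inv]
    refine mul_nonneg (Complex.zero_le_real.mpr (inv_nonneg.mpr (by nlinarith)))
      (add_nonneg hx hy)
  constructor
  · rw [Matrix.mul_add, Matrix.mul_add, Matrix.trace_add, Matrix.trace_add]
    exact add_le_add_right (sub_nonneg.mp ha12) _
  · rw [← sub_nonneg]
    have heq : ((β:ℂ)^2) * (S β * B * R₀⁻¹ * Bᴴ * S β * F β).trace
        - ((α:ℂ)^2) * (S α * B * R₀⁻¹ * Bᴴ * S α * F α).trace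
        = x + ((α:ℂ)^2) * (T1 - T2) := by
      linear_combination k12 - k11
    rw [heq]
    refine add_nonneg hx (mul_nonneg ?_ ha12)
    rw [show ((α:ℂ))^2 = ((α^2 : ℝ) : ℂ) by push_cast; ring]
    exact Complex.zero_le_real.mpr (sq_nonneg α)
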